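/- Let S be a finite family of elementary matrices B_{i₁,j₁},...,B_{i_k,j_k} over ZMod 2 that pairwise commute and are pairwise distinct, such that the index pairs satisfy: no index appears both as a first index and as a second index of (possibly different) pairs. Then the product G = B_{i_k,j_k}···B_{i₁,j₁} satisfies: all diagonal entries of G are 1, and whenever an off-diagonal entry G i j = 1 then all off-diagonal entries of row j of G are 0. -/

import Mathlib

open Matrix

/-- The elementary matrix over `ZMod 2`: the identity with an extra `1` at `(i, j)`. -/
def B {n : ℕ} (i j : Fin n) : Matrix (Fin n) (Fin n) (ZMod 2) :=
  1 + Matrix.single i j 1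

lemma mul_sum_zero {n : ℕ} (p : Fin n × Fin n) (L : List (Fin n × Fin n))
    (h : ∀ q ∈ L, p.2 ≠ q.1) :
    Matrix.single p.1 p.2 (1 : ZMod 2) *
      (L.map fun q => Matrix.single q.1 q.2 (1 : ZMod 2)).sum = 0 := by
  induction L with
  | nil => simp
  | cons q L ih =>
    simp only [List.map_cons, List.sum_cons, mul_add]
    rw [Matrix.single_mul_single_of_ne (i := p.1) (j := p.2) (k := q.1) (c := 1) (h := h q (by simp)) (d := 1),
      ih (fun r hr => h r (by simp [hr]))]
    simp

lemma prod_eq {n : ℕ} (L : List (Fin n × Fin n))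
    (hct : ∀ p ∈ L, ∀ q ∈ L, p.2 ≠ q.1) :
    (L.map fun p => B p.1 p.2).prod =
      1 + (L.map fun p => Matrix.single p.1 p.2 (1 : ZMod 2)).sum := by
  induction L with
  | nil => simp
  | cons p L ih =>
    simp only [List.map_cons, List.prod_cons, List.sum_cons]
    rw [ih (fun a ha b hb => hct a (by simp [ha]) b (by simp [hb]))]
    show B p.1 p.2 * _ = _
    rw [B, add_mul, one_mul, mul_add, mul_one,
      mul_sum_zero p L (fun q hq => hct p (by simp) q (by simp [hq]))]
    abel

lemma sum_entry {n : ℕ} (L : List (Fin n × Fin n)) (i j : Fin n) :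
    ((L.map fun p => Matrix.single p.1 p.2 (1 : ZMod 2)).sum) i j =
      (L.map fun p => if p.1 = i ∧ p.2 = j then (1 : ZMod 2) else 0).sum := by
  induction L with
  | nil => simp [Matrix.zero_apply]
  | cons p L ih =>
    rw [List.map_cons, List.sum_cons, Matrix.add_apply, ih,
      List.map_cons, List.sum_cons]
    congr 1

theorem product_commuting_elementary_matrices {n : ℕ}
    (L : List (Fin n × Fin n))
    (hne : ∀ p ∈ L, p.1 ≠ p.2)
    (hcomm : L.Pairwise fun p q => B p.1 p.2 * B q.1 q.2 = B q.1 q.2 * B p.1 p.2)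
    (hdist : L.Pairwise (· ≠ ·))
    (hct : ∀ p ∈ L, ∀ q ∈ L, p.2 ≠ q.1)
    (G : Matrix (Fin n) (Fin n) (ZMod 2))
    (hG : G = (L.map fun p => B p.1 p.2).prod) :
    (∀ i, G i i = 1) ∧
      (∀ i j, i ≠ j → G i j = 1 → ∀ k, k ≠ j → G j k = 0) := by
  rw [prod_eq L hct] at hG
  have hentry : ∀ i j, G i j = (if i = j then (1 : ZMod 2) else 0) +
      (L.map fun p => if p.1 = i ∧ p.2 = j then (1 : ZMod 2) else 0).sum := by
    intro i j
    rw [hG, Matrix.add_apply, sum_entry, Matrix.one_apply]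
  constructor
  · intro i
    rw [hentry i i, if_pos rfl]
    have : (L.map fun p => if p.1 = i ∧ p.2 = i then (1 : ZMod 2) else 0).sum = 0 := by
      rw [List.sum_eq_zero]
      intro x hx
      simp only [List.mem_map] at hx
      obtain ⟨p, hp, rfl⟩ := hx
      have := hne p hp
      rw [if_neg (by rintro ⟨h1, h2⟩; exact this (h1.trans h2.symm))]
    rw [this, add_zero]
  · intro i j hij hGij k hkj
    have hex : ∃ p ∈ L, p.1 = i ∧ p.2 = j := by
      by_contra hno
      push_neg at hno
      rw [hentry i j, if_neg hij, zero_add, List.sum_eq_zero] at hGij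
      · exact one_ne_zero hGij.symm
      · intro x hx
        simp only [List.mem_map] at hx
        obtain ⟨p, hp, rfl⟩ := hx
        rw [if_neg]
        intro ⟨h1, h2⟩
        exact (hno p hp h1) h2
    obtain ⟨p, hp, hp1, hp2⟩ := hex
    rw [hentry j k, if_neg (fun h => hkj h.symm), zero_add, List.sum_eq_zero]
    intro x hx
    simp only [List.mem_map] at hx
    obtain ⟨q, hq, rfl⟩ := hx
    rw [if_neg]
    intro ⟨h1, h2⟩
    exact hct p hp q hq (hp2.trans h1.symm)
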